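/- Let L be a CM field of degree 2g (g even) with totally real subfield R and an imaginary quadratic subfield Q, and let π ∈ L be a Weil q-number with ℚ(π) = L. If p is inert in Q, then there exists a positive integer w such that N_{L/Q}(π)^{2w} = q^{wg}, i.e., some power of the norm N_{L/Q}(π) equals the corresponding power of q^{g/2}. -/

import Mathlib

open NumberField Module
open scoped TensorProduct

lemma pair_li {F K : Type*} [Field F] [Field K] [Algebra F K]
    {x : K} (hx : x ∉ Set.range (algebraMap F K)) :
    LinearIndependent F ![(1 : K), x] := by
  rw [linearIndependent_fin2]
  constructor
  · simp only [Matrix.cons_val_one, Matrix.head_cons]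
    rintro rfl
    exact hx ⟨0, by simp⟩
  · intro a h
    simp only [Matrix.cons_val_one, Matrix.head_cons, Matrix.cons_val_zero] at h
    rcases eq_or_ne a 0 with rfl | ha
    · simp at h
    · exact hx ⟨a⁻¹, by rw [Algebra.algebraMap_eq_smul_one]; rw [← h, smul_smul,
        inv_mul_cancel₀ ha, one_smul]⟩

lemma quad_rel {F K : Type*} [Field F] [Field K] [Algebra F K] [FiniteDimensional F K]
    (h2 : finrank F K = 2) (x : K) :
    x ^ 2 - algebraMap F K (Algebra.trace F K x) * x + algebraMap F K (Algebra.norm F x) = 0 := by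
  by_cases hx : x ∈ Set.range (algebraMap F K)
  · obtain ⟨r, rfl⟩ := hx
    rw [Algebra.trace_algebraMap, Algebra.norm_algebraMap, h2, two_smul, map_add, map_pow]
    ring
  · have li := pair_li hx
    have card : Fintype.card (Fin 2) = finrank F K := by simp [h2]
    let b := basisOfLinearIndependentOfCardEqFinrank li card
    have hb : ⇑b = ![(1 : K), x] := coe_basisOfLinearIndependentOfCardEqFinrank li card
    have hb0 : b 0 = 1 := by rw [hb]; rfl
    have hb1 : b 1 = x := by rw [hb]; rfl
    have htr : Algebra.trace F K x = b.repr (x ^ 2) 1 := by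
      rw [Algebra.trace_eq_matrix_trace b, Matrix.trace_fin_two,
        Algebra.leftMulMatrix_eq_repr_mul, Algebra.leftMulMatrix_eq_repr_mul, hb0, hb1,
        mul_one, ← sq]
      have : b.repr x 0 = 0 := by rw [← hb1, b.repr_self]; simp
      rw [this, zero_add]
    have hnm : Algebra.norm F x = - b.repr (x ^ 2) 0 := by
      rw [Algebra.norm_eq_matrix_det b, Matrix.det_fin_two]
      simp only [Algebra.leftMulMatrix_eq_repr_mul, hb0, hb1, mul_one, ← sq]
      have h0 : b.repr x 0 = 0 := by rw [← hb1, b.repr_self]; simp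
      have h1 : b.repr x 1 = 1 := by rw [← hb1, b.repr_self]; simp
      rw [h0, h1, zero_mul, mul_one, zero_sub]
    have hsum : x ^ 2 = b.repr (x ^ 2) 0 • b 0 + b.repr (x ^ 2) 1 • b 1 := by
      have := b.sum_repr (x ^ 2)
      rwa [Fin.sum_univ_two, eq_comm] at this
    rw [hb0, hb1, Algebra.smul_def, Algebra.smul_def, mul_one] at hsum
    rw [htr, hnm, map_neg]
    linear_combination hsum

lemma tensor_ne {F K A : Type*} [Field F] [Field K] [Field A] [Algebra F K] [Algebra F A]
    [FiniteDimensional F K] (h2 : finrank F K = 2) {x : K}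
    (hx : x ∉ Set.range (algebraMap F K)) (z : A) :
    algebraMap A (A ⊗[F] K) z ≠ Algebra.TensorProduct.includeRight x := by
  have li := pair_li hx
  have card : Fintype.card (Fin 2) = finrank F K := by simp [h2]
  let b := basisOfLinearIndependentOfCardEqFinrank li card
  have hb : ⇑b = ![(1 : K), x] := coe_basisOfLinearIndependentOfCardEqFinrank li card
  have hb0 : b 0 = 1 := by rw [hb]; rfl
  have hb1 : b 1 = x := by rw [hb]; rfl
  intro h
  have h1 : algebraMap A (A ⊗[F] K) z = z ⊗ₜ[F] (1 : K) := rfl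
  have h2' : (Algebra.TensorProduct.includeRight x : A ⊗[F] K) = (1 : A) ⊗ₜ[F] x := rfl
  rw [h1, h2'] at h
  have := congrArg (fun y => (b.baseChange A).repr y 1) h
  simp only [Basis.baseChange_repr_tmul] at this
  have e0 : b.repr (1 : K) 1 = 0 := by rw [← hb0, b.repr_self]; simp
  have e1 : b.repr x 1 = 1 := by rw [← hb1, b.repr_self]; simp
  rw [e0, e1] at this
  simp at this

open Polynomial in
lemma pdiv (p : ℕ) [Fact p.Prime] {Q : Type*} [Field Q] [Algebra ℚ Q] [FiniteDimensional ℚ Q]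
    (hfield : IsField (ℚ_[p] ⊗[ℚ] Q)) (h2 : finrank ℚ Q = 2) {x : Q}
    (hx : x ∉ Set.range (algebraMap ℚ Q)) (m : ℤ) (k : ℕ)
    (hrel : x ^ 2 - algebraMap ℚ Q (m : ℚ) * x + algebraMap ℚ Q ((p : ℚ) ^ (2 * k)) = 0) :
    (p : ℤ) ^ k ∣ m := by
  have hp1 : (1 : ℝ) < p := by exact_mod_cast (Fact.out : p.Prime).one_lt
  by_contra hdvd
  have hm0 : m ≠ 0 := by rintro rfl; exact hdvd (dvd_zero _)
  set M : ℚ_[p] := (m : ℚ_[p]) with hM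
  have hM0 : M ≠ 0 := Int.cast_ne_zero.2 hm0
  have hMgt : (p : ℝ) ^ (-(k : ℤ)) < ‖M‖ := by
    by_contra hle
    exact hdvd ((Padic.norm_int_le_pow_iff_dvd m k).1 (not_lt.mp hle))
  have htpos : (0 : ℝ) < (p : ℝ) ^ (-(k : ℤ)) := zpow_pos (by exact_mod_cast (Fact.out : p.Prime).pos) _
  set s : ℚ_[p] := (p : ℚ_[p]) ^ (2 * k) / M ^ 2 with hs
  have hnorms : ‖s‖ < 1 := by
    have h1 : ‖s‖ = ((p : ℝ) ^ (-(k : ℤ))) ^ 2 / ‖M‖ ^ 2 := by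
      rw [hs, norm_div, norm_pow, norm_pow, Padic.norm_p]
      congr 1
      rw [inv_pow, ← zpow_natCast ((p : ℝ)) (2 * k), ← zpow_neg,
        ← zpow_natCast ((p : ℝ) ^ (-(k : ℤ))) 2, ← zpow_mul]
      congr 1
      push_cast
      ring
    rw [h1, div_lt_one (pow_pos (htpos.trans hMgt) 2)]
    exact pow_lt_pow_left₀ hMgt htpos.le two_ne_zero
  have hsle : ‖s‖ ≤ 1 := hnorms.le
  set s' : ℤ_[p] := ⟨s, hsle⟩ with hs'
  have hhyp : ‖(X ^ 2 - X + C s' : ℤ_[p][X]).eval 0‖ <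
      ‖((X ^ 2 - X + C s' : ℤ_[p][X]).derivative).eval 0‖ ^ 2 := by
    simp [Polynomial.derivative_pow]
    convert hnorms using 2
    rfl
  obtain ⟨z, hz, -, -, -⟩ := hensels_lemma hhyp
  have hw : (z : ℚ_[p]) ^ 2 - (z : ℚ_[p]) + s = 0 := by
    have hz' : z ^ 2 - z + s' = 0 := by simpa using hz
    have := congrArg (fun t : ℤ_[p] => (t : ℚ_[p])) hz'
    push_cast at this
    exact this
  set w : ℚ_[p] := (z : ℚ_[p])
  set z₀ : ℚ_[p] := M * w with hz₀
  set z₁ : ℚ_[p] := M - z₀ with hz₁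
  have hMs : M ^ 2 * s = (p : ℚ_[p]) ^ (2 * k) := by
    rw [hs]; field_simp
  have hprod : z₀ * z₁ = (p : ℚ_[p]) ^ (2 * k) := by
    linear_combination (-(M ^ 2)) * hw + hMs
  -- move to the tensor product
  set K := ℚ_[p] ⊗[ℚ] Q
  set φ : ℚ_[p] →+* K := algebraMap ℚ_[p] K with hφ
  set x' : K := Algebra.TensorProduct.includeRight x with hx'
  have hcast : ∀ r : ℚ, algebraMap ℚ K r = φ ((r : ℚ_[p])) := by
    intro r
    rw [IsScalarTower.algebraMap_apply ℚ ℚ_[p] K, eq_ratCast (algebraMap ℚ ℚ_[p]) r]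
  have hrelK : x' ^ 2 - φ M * x' + φ ((p : ℚ_[p]) ^ (2 * k)) = 0 := by
    have h0 := congrArg (Algebra.TensorProduct.includeRight (R := ℚ) (A := ℚ_[p]) (B := Q)) hrel
    simp only [map_add, map_sub, map_mul, map_pow, AlgHom.commutes, hcast] at h0
    rw [map_zero] at h0
    have e1 : (((m : ℚ)) : ℚ_[p]) = M := by norm_cast
    have e2 : (((p : ℚ) : ℚ_[p])) = (p : ℚ_[p]) := by norm_cast
    have hcast' : ∀ r : ℚ, algebraMap ℚ (ℚ_[p] ⊗[ℚ] Q) r = algebraMap ℚ_[p] (ℚ_[p] ⊗[ℚ] Q) (r : ℚ_[p]) := hcast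
    rw [hcast', hcast'] at h0
    rw [e1, e2] at h0
    rw [hx', hφ, map_pow]
    exact h0
  have hzsum : z₀ + z₁ = M := by rw [hz₁]; ring
  have hsumφ : φ z₀ + φ z₁ = φ M := by rw [← map_add, hzsum]
  have hprodφ : φ z₀ * φ z₁ = φ ((p : ℚ_[p]) ^ (2 * k)) := by rw [← map_mul, hprod]
  have hfactor : (x' - φ z₀) * (x' - φ z₁) = 0 := by
    linear_combination hrelK - x' * hsumφ + hprodφ
  rcases eq_or_ne (x' - φ z₀) 0 with h | h
  · exact tensor_ne h2 hx z₀ (sub_eq_zero.mp h).symm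
  · obtain ⟨c, hc⟩ := hfield.mul_inv_cancel h
    have hB : x' - φ z₁ = 0 := by
      linear_combination (-(x' - φ z₁)) * hc + c * hfactor
    exact tensor_ne h2 hx z₁ (sub_eq_zero.mp hB).symm

lemma emb_norm {Qf L : Type*} [Field Qf] [Field L] [Algebra Qf L] [FiniteDimensional Qf L]
    [Algebra.IsSeparable Qf L] (σ : Qf →+* ℂ) (π : L) {c : ℝ}
    (habs : ∀ τ : L →+* ℂ, ‖τ π‖ = c) :
    ‖σ (Algebra.norm Qf π)‖ = c ^ finrank Qf L := by
  letI : Algebra Qf ℂ := σ.toAlgebra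
  have h : σ (Algebra.norm Qf π) = ∏ τ : L →ₐ[Qf] ℂ, τ π :=
    Algebra.norm_eq_prod_embeddings Qf ℂ (x := π)
  rw [h, norm_prod]
  calc (∏ τ : L →ₐ[Qf] ℂ, ‖τ π‖) = ∏ _τ : L →ₐ[Qf] ℂ, c :=
        Finset.prod_congr rfl fun τ _ => habs (τ : L →+* ℂ)
    _ = c ^ finrank Qf L := by rw [Finset.prod_const, Finset.card_univ, AlgHom.card]

/-- Let `L` be a CM field of degree `2g` (`g` even) with totally real
subfield `R` and an imaginary quadratic subfield `Q`, and let `π ∈ L` be a Weil `q`-number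
with `ℚ(π) = L`. If `p` is inert in `Q`, then there exists a positive integer `w` with
`N_{L/Q}(π)^{2w} = q^{wg}`. -/
theorem stmt17 (g : ℕ) (hge : Even g) (hg : 0 < g) (p n q : ℕ) [Fact p.Prime]
    (hn : 0 < n) (hq : q = p ^ n)
    (L : Type*) [Field L] [NumberField L]
    (hLdeg : finrank ℚ L = 2 * g)
    (hLimag : ∀ σ : L →+* ℂ, ∃ x : L, (σ x).im ≠ 0)
    (R : IntermediateField ℚ L)
    (hRdeg : finrank ℚ R = g)
    (hRreal : ∀ σ : L →+* ℂ, ∀ x ∈ R, (σ x).im = 0)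
    (Q : IntermediateField ℚ L)
    (hQdeg : finrank ℚ Q = 2)
    (hQimag : ∀ σ : Q →+* ℂ, ∃ x : Q, (σ x).im ≠ 0)
    (hQinert : IsField (ℚ_[p] ⊗[ℚ] Q))
    (π : L) (hint : IsIntegral ℤ π)
    (habs : ∀ σ : L →+* ℂ, ‖σ π‖ = Real.sqrt q)
    (hgen : IntermediateField.adjoin ℚ ({π} : Set L) = ⊤) :
    ∃ w : ℕ, 0 < w ∧ (Algebra.norm Q π) ^ (2 * w) = (q : Q) ^ (w * g) := by
  haveI : FiniteDimensional Q L := FiniteDimensional.right ℚ Q L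
  have hppos : (0:ℝ) < p := by exact_mod_cast (Fact.out : p.Prime).pos
  have hqpos : 0 < q := by rw [hq]; exact pow_pos (Fact.out : p.Prime).pos n
  have hqR : (0:ℝ) < (q:ℝ) := by exact_mod_cast hqpos
  have hQL : finrank Q L = g := by
    have h := Module.finrank_mul_finrank ℚ (↥Q) L
    rw [hQdeg, hLdeg] at h
    omega
  set β : Q := Algebra.norm Q π with hβ
  -- archimedean size of β at each embedding
  have hβemb : ∀ σ : Q →+* ℂ, ‖σ β‖ = Real.sqrt q ^ g := by
    intro σ
    rw [hβ, emb_norm σ π habs, hQL]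
  have hsq : (Real.sqrt q ^ g) ^ 2 = (q:ℝ) ^ g := by
    rw [← pow_mul, mul_comm g 2, pow_mul, Real.sq_sqrt hqR.le]
  -- norm of π over ℚ, squared
  have hr2 : (Algebra.norm ℚ π) ^ 2 = (q:ℚ) ^ (2*g) := by
    have h1 : ‖(algebraMap ℚ ℂ) (Algebra.norm ℚ π)‖ = Real.sqrt q ^ (2*g) := by
      have := emb_norm (algebraMap ℚ ℂ) π habs
      rwa [hLdeg] at this
    rw [eq_ratCast (algebraMap ℚ ℂ)] at h1
    have h2 : ((Algebra.norm ℚ π : ℚ) : ℝ) ^ 2 = ((q:ℝ)) ^ (2*g) := by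
      have h3 := congrArg (· ^ 2) h1
      rw [show ((Algebra.norm ℚ π : ℚ) : ℂ) = (((Algebra.norm ℚ π : ℚ) : ℝ) : ℂ) by push_cast; rfl,
        Complex.norm_real, Real.norm_eq_abs, sq_abs] at h3
      rw [h3, ← pow_mul, mul_comm (2*g) 2, pow_mul, Real.sq_sqrt hqR.le]
    exact_mod_cast h2
  have hnn : Algebra.norm ℚ β = Algebra.norm ℚ π := Algebra.norm_norm (R := ℚ) (S := Q) (a := π)
  have hNβ : Algebra.norm ℚ (β^2) = (q:ℚ)^(2*g) := by
    rw [map_pow, hnn, hr2]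
  -- trace of β² is an integer
  have hβint : IsIntegral ℤ β := Algebra.isIntegral_norm (R := ℤ) Q hint
  have htrint : IsIntegral ℤ (Algebra.trace ℚ Q (β^2)) := Algebra.isIntegral_trace (hβint.pow 2)
  obtain ⟨m, hm⟩ : ∃ m : ℤ, algebraMap ℤ ℚ m = Algebra.trace ℚ Q (β^2) :=
    IsIntegrallyClosed.isIntegral_iff.mp htrint
  have hm' : ((m : ℚ)) = Algebra.trace ℚ Q (β^2) := by rw [← hm]; simp
  -- quadratic relation for β²
  have hrel0 := quad_rel hQdeg (β^2)
  rw [hNβ, ← hm'] at hrel0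
  by_cases hbot : (β^2 : Q) ∈ Set.range (algebraMap ℚ Q)
  · obtain ⟨s, hs⟩ := hbot
    have hnorm_s : s ^ 2 = (q:ℚ)^(2*g) := by
      have h := hNβ
      rw [← hs, Algebra.norm_algebraMap, hQdeg] at h
      exact h
    have hsor : s = (q:ℚ)^g ∨ s = -((q:ℚ)^g) := by
      have h0 : (s - (q:ℚ)^g) * (s + (q:ℚ)^g) = 0 := by
        have : (q:ℚ)^(2*g) = ((q:ℚ)^g)^2 := by rw [← pow_mul, mul_comm]
        linear_combination hnorm_s - this
      rcases mul_eq_zero.mp h0 with h | h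
      · exact Or.inl (by linarith [sub_eq_zero.mp h])
      · exact Or.inr (by linarith [eq_neg_of_add_eq_zero_left h])
    have hcastq : algebraMap ℚ Q ((q:ℚ)^g) = (q:Q)^g := by push_cast; rfl
    rcases hsor with rfl | rfl
    · refine ⟨1, one_pos, ?_⟩
      rw [mul_one, one_mul, ← hs, hcastq]
    · refine ⟨2, two_pos, ?_⟩
      have hb2 : β^2 = -((q:Q)^g) := by rw [← hs, map_neg, hcastq]
      have : (q:Q)^(2*g) = ((q:Q)^g)^2 := by rw [← pow_mul, mul_comm]
      calc β ^ (2*2) = (β^2)^2 := by ring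
        _ = (q:Q)^(2*g) := by rw [hb2, this]; ring
  · -- inert case: apply the p-adic divisibility
    have hrelP : (β^2) ^ 2 - algebraMap ℚ Q ((m:ℚ)) * (β^2)
        + algebraMap ℚ Q ((p:ℚ) ^ (2*(n*g))) = 0 := by
      have : ((q:ℚ))^(2*g) = (p:ℚ)^(2*(n*g)) := by
        rw [hq]; push_cast; rw [← pow_mul]; ring_nf
      rw [← this]
      exact hrel0
    have hdvd := pdiv p hQinert hQdeg hbot m (n*g) hrelP
    obtain ⟨t, ht⟩ := hdvd
    -- the trace bound
    have hcard : Fintype.card (Q →ₐ[ℚ] ℂ) = 2 := by rw [AlgHom.card, hQdeg]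
    have hbound : |(m:ℝ)| ≤ 2 * (q:ℝ)^g := by
      have h1 : ((m:ℚ):ℂ) = ∑ σ : Q →ₐ[ℚ] ℂ, σ (β^2) := by
        rw [hm', ← eq_ratCast (algebraMap ℚ ℂ) (Algebra.trace ℚ Q (β^2))]
        exact trace_eq_sum_embeddings ℂ
      have h2 : ‖((m:ℚ):ℂ)‖ ≤ 2 * (q:ℝ)^g := by
        rw [h1]
        calc ‖∑ σ : Q →ₐ[ℚ] ℂ, σ (β^2)‖ ≤ ∑ σ : Q →ₐ[ℚ] ℂ, ‖σ (β^2)‖ :=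
              norm_sum_le _ _
          _ = ∑ _σ : Q →ₐ[ℚ] ℂ, (q:ℝ)^g := by
              refine Finset.sum_congr rfl fun σ _ => ?_
              rw [map_pow, norm_pow, show ‖σ β‖ = ‖(σ : ↥Q →+* ℂ) β‖ from rfl,
                hβemb (σ : ↥Q →+* ℂ), hsq]
          _ = 2 * (q:ℝ)^g := by
              rw [Finset.sum_const, Finset.card_univ, hcard, nsmul_eq_mul]
              norm_num
      rw [show ((m:ℚ):ℂ) = ((m:ℝ):ℂ) by push_cast; rfl, Complex.norm_real,
        Real.norm_eq_abs] at h2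
      exact h2
    have hqg : ((q:ℝ))^g = ((p:ℝ))^(n*g) := by rw [hq]; push_cast; rw [← pow_mul]
    have ht2 : t = -2 ∨ t = -1 ∨ t = 0 ∨ t = 1 ∨ t = 2 := by
      have hpp : (0:ℝ) < (p:ℝ)^(n*g) := pow_pos hppos _
      have habs_t : |(t:ℝ)| ≤ 2 := by
        have hmabs : |(m:ℝ)| = (p:ℝ)^(n*g) * |(t:ℝ)| := by
          rw [ht]; push_cast; rw [abs_mul, abs_pow, abs_of_nonneg hppos.le]
        rw [hmabs, hqg] at hbound
        exact (mul_le_mul_iff_right₀ hpp).mp (by linarith : (p:ℝ)^(n*g) * |(t:ℝ)| ≤ (p:ℝ)^(n*g) * 2)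
      have h1 : |t| ≤ 2 := by exact_mod_cast habs_t
      have h2 := abs_le.mp h1
      omega
    -- rewrite the relation with c = q^g
    set c : Q := (q:Q)^g with hc
    have hcm : algebraMap ℚ Q ((m:ℚ)) = (t:Q) * c := by
      rw [ht, hc, hq]
      push_cast [map_mul, map_pow, map_intCast, map_natCast]
      ring
    have hc2 : algebraMap ℚ Q ((q:ℚ)^(2*g)) = c^2 := by
      rw [hc]; push_cast; rw [← pow_mul, mul_comm]
    have hrelQ : (β^2)^2 - (t:Q) * c * β^2 + c^2 = 0 := by
      rw [← hcm, ← hc2]; exact hrel0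
    have hcq : ∀ j : ℕ, (q:Q)^(j*g) = c^j := by
      intro j; rw [hc, ← pow_mul, mul_comm g j]
    rcases ht2 with rfl | rfl | rfl | rfl | rfl
    · refine ⟨2, two_pos, ?_⟩
      push_cast at hrelQ
      have h0 : (β^2 + c)^2 = 0 := by linear_combination hrelQ
      have hb2 : β^2 + c = 0 := pow_eq_zero_iff two_ne_zero |>.mp h0
      rw [hcq 2]
      linear_combination (β^2 - c) * hb2
    · refine ⟨3, by norm_num, ?_⟩
      push_cast at hrelQ
      rw [hcq 3]
      linear_combination (β^2 - c) * hrelQ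
    · refine ⟨4, by norm_num, ?_⟩
      push_cast at hrelQ
      rw [hcq 4]
      linear_combination (β^4 - c^2) * hrelQ
    · refine ⟨6, by norm_num, ?_⟩
      push_cast at hrelQ
      rw [hcq 6]
      linear_combination ((β^6 - c^3) * (β^2 + c)) * hrelQ
    · refine ⟨1, one_pos, ?_⟩
      push_cast at hrelQ
      have h0 : (β^2 - c)^2 = 0 := by linear_combination hrelQ
      have hb2 : β^2 - c = 0 := pow_eq_zero_iff two_ne_zero |>.mp h0
      rw [hcq 1]
      linear_combination hb2
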